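/- Let 1 < p < 2 < r with p > r/(r−1). Suppose g : Ω → ℝ is measurable with g ∈ 𝕃^{p,∞} and g − g∘T ∈ 𝕃^{r,∞}. Then (n log log n)^{-1/2} · g ∘ T^n → 0 μ-almost surely as n → ∞. (This is condition (1.7) of the equivalence theorem, from which the law of the iterated logarithm for f := m + g − g∘T follows for any square-integrable martingale differences sequence m.) -/

import Mathlib

open MeasureTheory Filter Topology
open Set
open scoped ENNReal NNReal

noncomputable section

lemma mySum1 {s : ℝ} (hs : 1 < s) : Summable (fun k : ℕ => (((k:ℝ)+1)^s)⁻¹) := by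
  have h := (Real.summable_nat_rpow_inv (p := s)).2 hs
  have := (summable_nat_add_iff (f := fun n : ℕ => (((n:ℝ))^s)⁻¹) 1).2 h
  refine this.congr fun k => by push_cast; ring_nf

lemma mySum2 {s : ℝ} (hs : 1 < s) :
    (∑' k:ℕ, ENNReal.ofReal ((((k:ℝ)+1)^s)⁻¹)) ≠ ∞ := by
  rw [← ENNReal.ofReal_tsum_of_nonneg (fun k => by positivity) (mySum1 hs)]
  exact ENNReal.ofReal_ne_top


lemma weak_moment {Ω : Type*} [MeasurableSpace Ω] (μ : Measure Ω) [IsProbabilityMeasure μ]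
    {h : Ω → ℝ} (hm : Measurable h) {r q : ℝ} (hq1 : 1 ≤ q) (hqr : q < r) (C : ℝ≥0)
    (hC : ∀ t : ℝ, 0 < t → ENNReal.ofReal (t ^ r) * μ {ω | t < |h ω|} ≤ C) :
    eLpNorm h (ENNReal.ofReal q) μ < ∞ := by
  have hq0 : (0:ℝ) < q := lt_of_lt_of_le one_pos hq1
  have hqE0 : ENNReal.ofReal q ≠ 0 := by simp [ENNReal.ofReal_eq_zero, not_le, hq0]
  have hqET : ENNReal.ofReal q ≠ ∞ := ENNReal.ofReal_ne_top
  rw [eLpNorm_eq_lintegral_rpow_enorm_toReal hqE0 hqET]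
  rw [ENNReal.toReal_ofReal hq0.le]
  have key : (∫⁻ x, ((‖h x‖₊ : ℝ≥0∞)) ^ q ∂μ) < ∞ := by
    have heq : (∫⁻ x, ((‖h x‖₊ : ℝ≥0∞)) ^ q ∂μ) = ∫⁻ x, ENNReal.ofReal (|h x| ^ q) ∂μ := by
      refine lintegral_congr fun x => ?_
      rw [← enorm_eq_nnnorm, Real.enorm_eq_ofReal_abs, ← ENNReal.ofReal_rpow_of_nonneg (abs_nonneg _) hq0.le]
    rw [heq, lintegral_rpow_eq_lintegral_meas_lt_mul μ (Eventually.of_forall fun x => abs_nonneg _)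
      (hm.abs.aemeasurable) hq0]
    refine ENNReal.mul_lt_top ENNReal.ofReal_lt_top ?_
    have hsplit : (Ioi (0:ℝ)) = Ioc (0:ℝ) 1 ∪ Ioi 1 := by
      rw [Ioc_union_Ioi_eq_Ioi]; norm_num
    rw [hsplit, lintegral_union measurableSet_Ioi (by
      intro s hs1 hs2 x hx
      exact absurd ((hs2 hx).out) (not_lt.2 (hs1 hx).out.2))]
    refine ENNReal.add_lt_top.2 ⟨?_, ?_⟩
    · calc ∫⁻ t in Ioc (0:ℝ) 1, μ {a | t < |h a|} * ENNReal.ofReal (t ^ (q - 1))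
          ≤ ∫⁻ _ in Ioc (0:ℝ) 1, 1 := by
            refine setLIntegral_mono' measurableSet_Ioc fun t ht => ?_
            calc μ {a | t < |h a|} * ENNReal.ofReal (t ^ (q - 1))
                ≤ 1 * 1 := by
                  refine mul_le_mul' prob_le_one ?_
                  rw [← ENNReal.ofReal_one]
                  exact ENNReal.ofReal_le_ofReal
                    (Real.rpow_le_one ht.1.le ht.2 (by linarith))
              _ = 1 := by simp
        _ < ∞ := by
            rw [setLIntegral_const]
            simp [Real.volume_Ioc]
    · calc ∫⁻ t in Ioi (1:ℝ), μ {a | t < |h a|} * ENNReal.ofReal (t ^ (q - 1))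
          ≤ ∫⁻ t in Ioi (1:ℝ), (C : ℝ≥0∞) * ENNReal.ofReal (t ^ (q - 1 - r)) := by
            refine setLIntegral_mono' measurableSet_Ioi fun t ht => ?_
            have ht0 : (0:ℝ) < t := lt_trans one_pos ht
            have h1 : μ {a | t < |h a|} ≤ (C : ℝ≥0∞) / ENNReal.ofReal (t ^ r) := by
              rw [ENNReal.le_div_iff_mul_le (Or.inl (by
                  simp [ENNReal.ofReal_eq_zero, not_le]; positivity))
                (Or.inl ENNReal.ofReal_ne_top), mul_comm]
              exact hC t ht0
            calc μ {a | t < |h a|} * ENNReal.ofReal (t ^ (q - 1))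
                ≤ ((C : ℝ≥0∞) / ENNReal.ofReal (t ^ r)) * ENNReal.ofReal (t ^ (q - 1)) :=
                  mul_le_mul_left h1 _
              _ = (C : ℝ≥0∞) * ENNReal.ofReal (t ^ (q - 1 - r)) := by
                  have hofr : (ENNReal.ofReal (t^r))⁻¹ * ENNReal.ofReal (t ^ (q-1))
                      = ENNReal.ofReal (t ^ (q-1-r)) := by
                    rw [← ENNReal.ofReal_inv_of_pos (show (0:ℝ) < t^r by positivity),
                      ← ENNReal.ofReal_mul (by positivity), ← Real.rpow_neg ht0.le,
                      ← Real.rpow_add ht0]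
                    congr 1
                    ring_nf
                  rw [ENNReal.div_eq_inv_mul, mul_comm ((ENNReal.ofReal (t^r))⁻¹) ((C:ℝ≥0∞)),
                    mul_assoc, hofr]
        _ < ∞ := by
            rw [lintegral_const_mul' _ _ ENNReal.coe_ne_top]
            refine ENNReal.mul_lt_top ENNReal.coe_lt_top ?_
            have hint : IntegrableOn (fun t : ℝ => t ^ (q - 1 - r)) (Ioi 1) :=
              integrableOn_Ioi_rpow_of_lt (by linarith) one_pos
            rw [← ofReal_integral_eq_lintegral_ofReal hint (by
              filter_upwards [self_mem_ae_restrict measurableSet_Ioi] with t ht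
              have : (0:ℝ) < t := lt_trans one_pos ht
              positivity)]
            exact ENNReal.ofReal_lt_top
  exact ENNReal.rpow_lt_top_of_nonneg (by positivity) key.ne


section Aux
variable {Ω : Type*} [MeasurableSpace Ω] (μ : Measure Ω) [IsProbabilityMeasure μ]

set_option maxHeartbeats 1000000 in
lemma aux_block (T : Ω ≃ᵐ Ω) (hT : MeasurePreserving (⇑T) μ μ)
    (p r : ℝ) (hp1 : 1 < p) (hp2 : p < 2) (hr : 2 < r) (hpr : r / (r - 1) < p)
    (g : Ω → ℝ) (hg : Measurable g)
    (hgweak : ∃ C : ℝ≥0, ∀ t : ℝ, 0 < t →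
      ENNReal.ofReal (t ^ p) * μ {ω | t < |g ω|} ≤ C)
    (hcobweak : ∃ C : ℝ≥0, ∀ t : ℝ, 0 < t →
      ENNReal.ofReal (t ^ r) * μ {ω | t < |g ω - g (T ω)|} ≤ C)
    (ε : ℝ) (hε : 0 < ε) :
    ∀ᵐ ω ∂μ, ∀ᶠ n in atTop, |g ((⇑T)^[n] ω)| ≤ ε * Real.sqrt n := by
  obtain ⟨Cg, hCg⟩ := hgweak
  obtain ⟨Cr, hCr⟩ := hcobweak
  set h : Ω → ℝ := fun ω => g ω - g (T ω) with hh_def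
  have hh : Measurable h := hg.sub (hg.comp T.measurable)
  -- exponents
  set a : ℝ := p / (p - 1) with ha_def
  have hp0 : (0:ℝ) < p - 1 := by linarith
  have ha2 : 2 < a := by
    rw [ha_def, lt_div_iff₀ hp0]; nlinarith
  have har : a < r := by
    rw [ha_def, div_lt_iff₀ hp0]
    rw [div_lt_iff₀ (by linarith : (0:ℝ) < r - 1)] at hpr
    nlinarith
  set q : ℝ := (a + r) / 2 with hq_def
  have hq2 : 2 < q := by rw [hq_def]; linarith
  have hqr : q < r := by rw [hq_def]; linarith
  have haq : a < q := by rw [hq_def]; linarith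
  set β : ℝ := (2 / p + (2 - 2 / q)) / 2 with hβ_def
  have hq0 : (0:ℝ) < q := by linarith
  have h1q : 1 / q < (p - 1) / p := by
    rw [div_lt_div_iff₀ hq0 (by linarith : (0:ℝ) < p)]
    rw [div_lt_iff₀ hp0] at haq
    nlinarith
  have h3q : 2 / q = 2 * (1 / q) := by ring
  have h2p : 2 - 2 / p = 2 * ((p - 1) / p) := by field_simp
  have hkey : 2 / p < 2 - 2 / q := by nlinarith
  have hβ1 : 1 < β := by
    have e1 : (1:ℝ) < 2 / p := by rw [lt_div_iff₀ (by linarith : (0:ℝ) < p)]; linarith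
    have e2 : 2 / q < 1 := by rw [div_lt_one hq0]; linarith
    rw [hβ_def]; linarith
  have hβ2 : β < 2 := by
    have e1 : 2 / p ≤ 2 := by rw [div_le_iff₀ (by linarith : (0:ℝ) < p)]; nlinarith
    have e2 : 0 < 2 / q := by positivity
    rw [hβ_def]; linarith
  have hs1 : 1 < β * p / 2 := by
    have hb : 2 / p < β := by rw [hβ_def]; linarith
    rw [lt_div_iff₀ (by norm_num : (0:ℝ) < 2)]
    calc (1:ℝ) * 2 = (2 / p) * p := by field_simp
    _ < β * p := by gcongr
  have hs2 : 1 < q * (1 - β / 2) := by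
    have hb : β < 2 - 2 / q := by rw [hβ_def]; linarith
    have e : 1 / q < 1 - β / 2 := by linarith
    calc (1:ℝ) = q * (1 / q) := by field_simp
    _ < q * (1 - β / 2) := by gcongr
  -- the block sequence
  set N : ℕ → ℕ := fun k => ⌈((k:ℝ)+1)^β⌉₊ with hN_def
  have hβ0 : (0:ℝ) < β := by linarith
  have hNlb : ∀ k : ℕ, ((k:ℝ)+1)^β ≤ N k := fun k => Nat.le_ceil _
  have hNub : ∀ k : ℕ, (N k : ℝ) < ((k:ℝ)+1)^β + 1 := fun k =>
    Nat.ceil_lt_add_one (by positivity)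
  have hx1 : ∀ k : ℕ, (1:ℝ) ≤ (k:ℝ)+1 := fun k => by
    have := Nat.cast_nonneg (α := ℝ) k; linarith
  have hxb : ∀ k : ℕ, ((k:ℝ)+1) ≤ ((k:ℝ)+1)^β := fun k => by
    calc ((k:ℝ)+1) = ((k:ℝ)+1)^(1:ℝ) := (Real.rpow_one _).symm
    _ ≤ ((k:ℝ)+1)^β := Real.rpow_le_rpow_of_exponent_le (hx1 k) hβ1.le
  have hN1 : ∀ k : ℕ, k + 1 ≤ N k := by
    intro k
    have : ((k:ℝ)+1) ≤ (N k : ℝ) := le_trans (hxb k) (hNlb k)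
    exact_mod_cast this
  have hNpos : ∀ k : ℕ, 0 < N k := fun k => lt_of_lt_of_le (Nat.succ_pos k) (hN1 k)
  have hstep : ∀ k : ℕ, ((k:ℝ)+1)^β + 1 ≤ ((k:ℝ)+2)^β := by
    intro k
    set x : ℝ := (k:ℝ)+1 with hx_def
    have hx : (1:ℝ) ≤ x := hx1 k
    have hx0 : (0:ℝ) < x := by linarith
    have e1 : ((k:ℝ)+2) = x * (1 + 1/x) := by field_simp; ring
    have e2 : (x * (1 + 1/x))^β = x^β * (1 + 1/x)^β :=
      Real.mul_rpow hx0.le (by positivity)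
    have hinvx : (0:ℝ) < 1/x := by positivity
    have e3 : 1 + β * (1/x) ≤ (1 + 1/x)^β :=
      one_add_mul_self_le_rpow_one_add (by linarith) hβ1.le
    have e4 : x ≤ x^β := by
      calc x = x^(1:ℝ) := (Real.rpow_one _).symm
      _ ≤ x^β := Real.rpow_le_rpow_of_exponent_le hx hβ1.le
    have e5 : x^β * (1 + β * (1/x)) = x^β + β * (x^β / x) := by ring
    have e6 : x ≤ x^β := e4
    have e7 : (1:ℝ) ≤ x^β / x := by
      rw [le_div_iff₀ hx0]; linarith
    have e8 : (1:ℝ) ≤ β * (x^β / x) := by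
      calc (1:ℝ) = 1 * 1 := by ring
      _ ≤ β * (x^β / x) := mul_le_mul hβ1.le e7 one_pos.le (by linarith)
    calc x^β + 1 ≤ x^β + β * (x^β / x) := by linarith
    _ = x^β * (1 + β * (1/x)) := by ring
    _ ≤ x^β * (1 + 1/x)^β := by
        have hxβ : (0:ℝ) ≤ x^β := by positivity
        exact mul_le_mul_of_nonneg_left e3 hxβ
    _ = ((k:ℝ)+2)^β := by rw [e1, e2]
  have hNmono : ∀ k : ℕ, N k < N (k+1) := by
    intro k
    have : (N k : ℝ) < (N (k+1) : ℝ) := by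
      calc (N k : ℝ) < ((k:ℝ)+1)^β + 1 := hNub k
      _ ≤ ((k:ℝ)+2)^β := hstep k
      _ ≤ (N (k+1) : ℝ) := by
          have h2 := hNlb (k+1)
          have e : (((k+1:ℕ)):ℝ)+1 = (k:ℝ)+2 := by push_cast; ring
          rw [e] at h2
          exact h2
    exact_mod_cast this
  have hdelta : ∀ k : ℕ, ((N (k+1) : ℝ) - (N k : ℝ)) ≤ 4 * ((k:ℝ)+1)^(β-1) := by
    intro k
    set x : ℝ := (k:ℝ)+1 with hx_def
    have hx : (1:ℝ) ≤ x := hx1 k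
    have hx0 : (0:ℝ) < x := by linarith
    have e1 : ((k:ℝ)+2) = x * (1 + 1/x) := by field_simp; ring
    have e2 : (x * (1 + 1/x))^β = x^β * (1 + 1/x)^β :=
      Real.mul_rpow hx0.le (by positivity)
    have hinvx : (0:ℝ) < 1/x := by positivity
    have e3 : (1 + 1/x)^β ≤ (1 + 1/x)^(2:ℝ) :=
      Real.rpow_le_rpow_of_exponent_le (by linarith) hβ2.le
    have e4 : (1 + 1/x)^(2:ℝ) = 1 + 2/x + 1/x^2 := by
      rw [Real.rpow_two]; field_simp; ring
    have e5 : 1 + 2/x + 1/x^2 ≤ 1 + 3/x := by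
      have : 1/x^2 ≤ 1/x := by
        apply one_div_le_one_div_of_le hx0
        nlinarith
      have h2x : 2/x = 2*(1/x) := by ring
      have h3x : 3/x = 3*(1/x) := by ring
      linarith
    have e6 : x^β / x = x^(β-1) := by
      rw [Real.rpow_sub hx0, Real.rpow_one]
    have e7 : (1:ℝ) ≤ x^(β-1) := Real.one_le_rpow hx (by linarith)
    have e8 : ((k:ℝ)+2)^β ≤ x^β + 3 * x^(β-1) := by
      calc ((k:ℝ)+2)^β = x^β * (1 + 1/x)^β := by rw [e1, e2]
      _ ≤ x^β * (1 + 3/x) := by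
          have hxβ : (0:ℝ) ≤ x^β := by positivity
          have : (1 + 1/x)^β ≤ 1 + 3/x := by linarith
          exact mul_le_mul_of_nonneg_left this hxβ
      _ = x^β + 3 * (x^β / x) := by ring
      _ = x^β + 3 * x^(β-1) := by rw [e6]
    have lhs1 : (N (k+1) : ℝ) < ((k:ℝ)+2)^β + 1 := by
      have h2 := hNub (k+1)
      have e : (((k+1:ℕ)):ℝ)+1 = (k:ℝ)+2 := by push_cast; ring
      rw [e] at h2
      exact h2
    have lhs2 : x^β ≤ (N k : ℝ) := hNlb k
    calc (N (k+1) : ℝ) - (N k : ℝ) ≤ ((k:ℝ)+2)^β + 1 - x^β := by linarith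
    _ ≤ 3 * x^(β-1) + 1 := by linarith
    _ ≤ 4 * x^(β-1) := by linarith
  -- thresholds and events
  have hq1' : (1:ℝ) ≤ q := by linarith
  have hqE0 : ENNReal.ofReal q ≠ 0 := by simp [ENNReal.ofReal_eq_zero, not_le]; linarith
  have hqET : ENNReal.ofReal q ≠ ∞ := ENNReal.ofReal_ne_top
  have hHq : eLpNorm h (ENNReal.ofReal q) μ < ∞ :=
    weak_moment μ hh hq1' hqr Cr hCr
  set Hq : ℝ≥0∞ := eLpNorm h (ENNReal.ofReal q) μ with hHq_def
  set tk : ℕ → ℝ := fun k => ε/2 * ((k:ℝ)+1)^(β/2) with htk_def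
  have htk : ∀ k, 0 < tk k := fun k => by
    have : (0:ℝ) < ((k:ℝ)+1)^(β/2) := Real.rpow_pos_of_pos (by positivity) _
    have : (0:ℝ) < ε/2 := by linarith
    simp only [htk_def]
    positivity
  have htkpow : ∀ (z : ℝ), 0 < z → ∀ k, tk k ^ z = (ε/2)^z * ((k:ℝ)+1)^(β*z/2) := by
    intro z hz k
    simp only [htk_def]
    rw [Real.mul_rpow (by linarith) (by positivity), ← Real.rpow_mul (by positivity)]
    congr 2
    ring
  set A : ℕ → Set Ω := fun k => {ω | tk k < |g ((⇑T)^[N k] ω)|} with hA_def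
  set E : ℕ → Set Ω := fun k =>
    {ω | tk k ≤ ∑ j ∈ Finset.Ico (N k) (N (k+1)), |h ((⇑T)^[j] ω)|} with hE_def
  -- measure of A k
  have hAm : ∀ k, μ (A k) ≤ (Cg : ℝ≥0∞) * ENNReal.ofReal (((ε/2)^p)⁻¹)
      * ENNReal.ofReal ((((k:ℝ)+1)^(β*p/2))⁻¹) := by
    intro k
    have hmp : MeasurePreserving ((⇑T)^[N k]) μ μ := hT.iterate (N k)
    have hms : MeasurableSet {ω | tk k < |g ω|} := measurableSet_lt measurable_const hg.abs
    have hpre : μ (A k) = μ {ω | tk k < |g ω|} := by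
      rw [hA_def]
      exact hmp.measure_preimage hms.nullMeasurableSet
    have hofR0 : ENNReal.ofReal (tk k ^ p) ≠ 0 := by
      simp only [ne_eq, ENNReal.ofReal_eq_zero, not_le]
      exact Real.rpow_pos_of_pos (htk k) _
    have hb : μ {ω | tk k < |g ω|} ≤ (Cg : ℝ≥0∞) / ENNReal.ofReal (tk k ^ p) := by
      rw [ENNReal.le_div_iff_mul_le (Or.inl hofR0) (Or.inl ENNReal.ofReal_ne_top), mul_comm]
      exact hCg (tk k) (htk k)
    rw [hpre]
    refine hb.trans ?_
    rw [htkpow p (by linarith) k, ENNReal.div_eq_inv_mul,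
      ← ENNReal.ofReal_inv_of_pos (by positivity), mul_inv,
      ENNReal.ofReal_mul (by positivity)]
    exact le_of_eq (by ring)
  have hAsum : (∑' k, μ (A k)) ≠ ∞ := by
    have hs1' : (1:ℝ) < β*p/2 := hs1
    refine ne_top_of_le_ne_top ?_ (ENNReal.tsum_le_tsum hAm)
    rw [ENNReal.tsum_mul_left]
    exact ENNReal.mul_ne_top (ENNReal.mul_ne_top ENNReal.coe_ne_top ENNReal.ofReal_ne_top)
      (mySum2 hs1')
  -- measure of E k
  have hcard : ∀ k, ((N (k+1) - N k : ℕ) : ℝ) ≤ 4 * ((k:ℝ)+1)^(β-1) := by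
    intro k
    rw [Nat.cast_sub (hNmono k).le]
    exact hdelta k
  have hEm : ∀ k, μ (E k) ≤ ENNReal.ofReal ((((ε/2)^q)⁻¹) * 4^q) * Hq ^ q
      * ENNReal.ofReal ((((k:ℝ)+1)^(q*(1-β/2)))⁻¹) := by
    intro k
    set D : Ω → ℝ := fun ω => ∑ j ∈ Finset.Ico (N k) (N (k+1)), |h ((⇑T)^[j] ω)| with hD_def
    have hDmeas : Measurable D :=
      Finset.measurable_sum _ fun j _ => (hh.comp (T.measurable.iterate j)).abs
    have hsub : E k ⊆ {ω | ENNReal.ofReal (tk k) ≤ (‖D ω‖₊ : ℝ≥0∞)} := by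
      intro ω hω
      simp only [hE_def, Set.mem_setOf_eq] at hω
      simp only [Set.mem_setOf_eq, ← enorm_eq_nnnorm, Real.enorm_eq_ofReal_abs]
      exact ENNReal.ofReal_le_ofReal (le_trans hω (le_abs_self _))
    have htkE0 : ENNReal.ofReal (tk k) ≠ 0 := by
      simp only [ne_eq, ENNReal.ofReal_eq_zero, not_le]
      exact htk k
    have cheb := meas_ge_le_mul_pow_eLpNorm_enorm (μ := μ) hqE0 hqET hDmeas.aestronglyMeasurable htkE0
      (fun h => absurd h ENNReal.ofReal_ne_top)
    have hDle : eLpNorm D (ENNReal.ofReal q) μ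
        ≤ ((N (k+1) - N k : ℕ) : ℝ≥0∞) * Hq := by
      have hDeq : D = ∑ j ∈ Finset.Ico (N k) (N (k+1)), (fun ω => |h ((⇑T)^[j] ω)|) := by
        funext ω
        simp [hD_def, Finset.sum_apply]
      have hone : (1:ℝ≥0∞) ≤ ENNReal.ofReal q := by
        rw [ENNReal.one_le_ofReal]; linarith
      calc eLpNorm D (ENNReal.ofReal q) μ
          = eLpNorm (∑ j ∈ Finset.Ico (N k) (N (k+1)), (fun ω => |h ((⇑T)^[j] ω)|))
            (ENNReal.ofReal q) μ := by rw [← hDeq]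
        _ ≤ ∑ j ∈ Finset.Ico (N k) (N (k+1)),
            eLpNorm (fun ω => |h ((⇑T)^[j] ω)|) (ENNReal.ofReal q) μ :=
          eLpNorm_sum_le (fun j _ =>
            ((hh.comp (T.measurable.iterate j)).abs).aestronglyMeasurable) hone
        _ = ∑ j ∈ Finset.Ico (N k) (N (k+1)), Hq := by
            refine Finset.sum_congr rfl fun j _ => ?_
            have e1 : (fun ω => |h ((⇑T)^[j] ω)|) = (fun x => |h x|) ∘ (⇑T)^[j] := rfl
            rw [e1, eLpNorm_comp_measurePreserving hh.abs.aestronglyMeasurable (hT.iterate j)]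
            have e2 : (fun x => |h x|) = fun x => ‖h x‖ := by
              funext x; rw [Real.norm_eq_abs]
            rw [e2, eLpNorm_norm]
        _ = ((N (k+1) - N k : ℕ) : ℝ≥0∞) * Hq := by
            rw [Finset.sum_const, Nat.card_Ico, nsmul_eq_mul]
    have step1 : μ (E k) ≤ (ENNReal.ofReal (tk k))⁻¹ ^ q
        * (((N (k+1) - N k : ℕ) : ℝ≥0∞) * Hq) ^ q := by
      refine (measure_mono hsub).trans (cheb.trans ?_)
      rw [ENNReal.toReal_ofReal (by linarith : (0:ℝ) ≤ q)]
      exact mul_le_mul_right (ENNReal.rpow_le_rpow hDle (by linarith)) _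
    refine step1.trans ?_
    have e3 : (ENNReal.ofReal (tk k))⁻¹ ^ q = ENNReal.ofReal ((tk k ^ q)⁻¹) := by
      rw [ENNReal.inv_rpow, ENNReal.ofReal_rpow_of_pos (htk k),
        ← ENNReal.ofReal_inv_of_pos (Real.rpow_pos_of_pos (htk k) q)]
    have e4 : (((N (k+1) - N k : ℕ) : ℝ≥0∞) * Hq) ^ q
        = ENNReal.ofReal (((N (k+1) - N k : ℕ) : ℝ)) ^ q * Hq ^ q := by
      rw [ENNReal.mul_rpow_of_nonneg _ _ (by linarith : (0:ℝ) ≤ q),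
        ENNReal.ofReal_natCast]
    have e5 : ENNReal.ofReal (((N (k+1) - N k : ℕ) : ℝ)) ^ q
        ≤ ENNReal.ofReal (4^q * ((k:ℝ)+1)^(q*(β-1))) := by
      rw [ENNReal.ofReal_rpow_of_nonneg (Nat.cast_nonneg _) (by linarith : (0:ℝ) ≤ q)]
      refine ENNReal.ofReal_le_ofReal ?_
      calc ((N (k+1) - N k : ℕ) : ℝ) ^ q ≤ (4 * ((k:ℝ)+1)^(β-1)) ^ q := by
            refine Real.rpow_le_rpow (Nat.cast_nonneg _) (hcard k) (by linarith)
      _ = 4^q * ((k:ℝ)+1)^(q*(β-1)) := by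
          rw [Real.mul_rpow (by norm_num) (by positivity),
            ← Real.rpow_mul (by positivity)]
          congr 2
          ring
    have e6 : (tk k ^ q)⁻¹ = ((ε/2)^q)⁻¹ * (((k:ℝ)+1)^(β*q/2))⁻¹ := by
      rw [htkpow q (by linarith) k, mul_inv]
    have e7 : ((k:ℝ)+1)^(q*(β-1)) * (((k:ℝ)+1)^(β*q/2))⁻¹
        = (((k:ℝ)+1)^(q*(1-β/2)))⁻¹ := by
      rw [← Real.rpow_neg (by positivity), ← Real.rpow_add (by positivity),
        ← Real.rpow_neg (by positivity)]
      congr 1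
      ring
    calc (ENNReal.ofReal (tk k))⁻¹ ^ q * (((N (k+1) - N k : ℕ) : ℝ≥0∞) * Hq) ^ q
        = ENNReal.ofReal ((tk k ^ q)⁻¹)
          * (ENNReal.ofReal (((N (k+1) - N k : ℕ) : ℝ)) ^ q * Hq ^ q) := by rw [e3, e4]
      _ ≤ ENNReal.ofReal ((tk k ^ q)⁻¹)
          * (ENNReal.ofReal (4^q * ((k:ℝ)+1)^(q*(β-1))) * Hq ^ q) := by
          exact mul_le_mul_right (mul_le_mul_left e5 _) _
      _ = ENNReal.ofReal ((((ε/2)^q)⁻¹) * 4^q) * Hq ^ q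
          * ENNReal.ofReal ((((k:ℝ)+1)^(q*(1-β/2)))⁻¹) := by
          rw [e6, ← e7]
          rw [ENNReal.ofReal_mul (by positivity), ENNReal.ofReal_mul (by positivity),
            ENNReal.ofReal_mul (by positivity), ENNReal.ofReal_mul (by positivity)]
          ring
  have hEsum : (∑' k, μ (E k)) ≠ ∞ := by
    refine ne_top_of_le_ne_top ?_ (ENNReal.tsum_le_tsum hEm)
    rw [ENNReal.tsum_mul_left]
    exact ENNReal.mul_ne_top
      (ENNReal.mul_ne_top ENNReal.ofReal_ne_top
        (ENNReal.rpow_ne_top_of_nonneg (by linarith) hHq.ne))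
      (mySum2 hs2)
  -- Borel–Cantelli
  have hBC1 : ∀ᵐ ω ∂μ, ∀ᶠ k in atTop, ω ∉ A k := ae_eventually_notMem hAsum
  have hBC2 : ∀ᵐ ω ∂μ, ∀ᶠ k in atTop, ω ∉ E k := ae_eventually_notMem hEsum
  filter_upwards [hBC1, hBC2] with ω h1 h2
  obtain ⟨K1, hK1⟩ := eventually_atTop.1 h1
  obtain ⟨K2, hK2⟩ := eventually_atTop.1 h2
  set K := max K1 K2 with hK_def
  rw [eventually_atTop]
  refine ⟨N K, fun n hn => ?_⟩
  have hKn : K ≤ n := le_trans (le_trans (Nat.le_succ K) (hN1 K)) hn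
  set k := Nat.findGreatest (fun j => N j ≤ n) n with hk_def
  have hKk : K ≤ k := Nat.le_findGreatest (P := fun j => N j ≤ n) hKn hn
  have hkn : N k ≤ n := Nat.findGreatest_spec (P := fun j => N j ≤ n) (m := K) hKn hn
  have hnk : n < N (k+1) := by
    by_contra hcon
    push_neg at hcon
    have h1n : k + 1 ≤ n := le_trans (le_trans (Nat.le_succ _) (hN1 (k+1))) hcon
    exact Nat.findGreatest_is_greatest (Nat.lt_succ_self k) h1n hcon
  have hA' := hK1 k (le_trans (le_max_left _ _) hKk)
  have hE' := hK2 k (le_trans (le_max_right _ _) hKk)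
  simp only [hA_def, Set.mem_setOf_eq, not_lt] at hA'
  simp only [hE_def, Set.mem_setOf_eq, not_le] at hE'
  have tel : ∀ m, N k ≤ m → g ((⇑T)^[N k] ω) - g ((⇑T)^[m] ω)
      = ∑ j ∈ Finset.Ico (N k) m, h ((⇑T)^[j] ω) := by
    intro m hm
    induction m, hm using Nat.le_induction with
    | base => simp
    | succ m hm ih =>
        rw [Finset.sum_Ico_succ_top hm, ← ih]
        have e : h ((⇑T)^[m] ω) = g ((⇑T)^[m] ω) - g ((⇑T)^[m+1] ω) := by
          simp only [hh_def]
          rw [Function.iterate_succ_apply']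
        rw [e]
        ring
  have habs : |g ((⇑T)^[n] ω)| ≤ tk k + tk k := by
    have t1 := tel n hkn
    have t2 : |∑ j ∈ Finset.Ico (N k) n, h ((⇑T)^[j] ω)|
        ≤ ∑ j ∈ Finset.Ico (N k) n, |h ((⇑T)^[j] ω)| := Finset.abs_sum_le_sum_abs _ _
    have t3 : ∑ j ∈ Finset.Ico (N k) n, |h ((⇑T)^[j] ω)|
        ≤ ∑ j ∈ Finset.Ico (N k) (N (k+1)), |h ((⇑T)^[j] ω)| :=
      Finset.sum_le_sum_of_subset_of_nonneg
        (Finset.Ico_subset_Ico le_rfl hnk.le) (fun j _ _ => abs_nonneg _)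
    have t4 : |g ((⇑T)^[n] ω)| ≤ |g ((⇑T)^[N k] ω)|
        + |∑ j ∈ Finset.Ico (N k) n, h ((⇑T)^[j] ω)| := by
      have e : g ((⇑T)^[n] ω) = g ((⇑T)^[N k] ω)
          - ∑ j ∈ Finset.Ico (N k) n, h ((⇑T)^[j] ω) := by linarith
      rw [e]
      exact abs_sub _ _
    linarith
  have hfin : tk k + tk k = ε * ((k:ℝ)+1)^(β/2) := by
    simp only [htk_def]
    ring
  calc |g ((⇑T)^[n] ω)| ≤ ε * ((k:ℝ)+1)^(β/2) := by rw [← hfin]; exact habs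
  _ ≤ ε * Real.sqrt n := by
      have e : ((k:ℝ)+1)^(β/2) = Real.sqrt (((k:ℝ)+1)^β) := by
        rw [Real.sqrt_eq_rpow, ← Real.rpow_mul (by positivity)]
        congr 1
        ring
      rw [e]
      refine mul_le_mul_of_nonneg_left ?_ hε.le
      refine Real.sqrt_le_sqrt ?_
      calc ((k:ℝ)+1)^β ≤ (N k : ℝ) := hNlb k
      _ ≤ (n : ℝ) := Nat.cast_le.2 hkn
end Aux

/-- **Theorem 2.4 (i), key conclusion**: if `1 < p < 2 < r`, `p > r/(r-1)`, `g ∈ 𝕃^{p,∞}` and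
`g - g∘T ∈ 𝕃^{r,∞}`, then `(n log log n)^{-1/2} g ∘ T^n → 0` almost surely. -/
theorem stmt1 {Ω : Type*} [MeasurableSpace Ω] (μ : Measure Ω) [IsProbabilityMeasure μ]
    (T : Ω ≃ᵐ Ω) (hT : MeasurePreserving (⇑T) μ μ)
    (p r : ℝ) (hp1 : 1 < p) (hp2 : p < 2) (hr : 2 < r) (hpr : r / (r - 1) < p)
    (g : Ω → ℝ) (hg : Measurable g)
    (hgweak : ∃ C : ℝ≥0, ∀ t : ℝ, 0 < t →
      ENNReal.ofReal (t ^ p) * μ {ω | t < |g ω|} ≤ C)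
    (hcobweak : ∃ C : ℝ≥0, ∀ t : ℝ, 0 < t →
      ENNReal.ofReal (t ^ r) * μ {ω | t < |g ω - g (T ω)|} ≤ C) :
    ∀ᵐ ω ∂μ, Tendsto
      (fun n : ℕ => g ((⇑T)^[n] ω) / Real.sqrt (n * Real.log (Real.log n)))
      atTop (𝓝 0) := by

  have key : ∀ m : ℕ, ∀ᵐ ω ∂μ, ∀ᶠ n in atTop,
      |g ((⇑T)^[n] ω)| ≤ (1/((m:ℝ)+1)) * Real.sqrt n := fun m =>
    aux_block μ T hT p r hp1 hp2 hr hpr g hg hgweak hcobweak _ (by positivity)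
  filter_upwards [ae_all_iff.2 key] with ω hω
  rw [NormedAddCommGroup.tendsto_nhds_zero]
  intro ε hε
  obtain ⟨m, hm⟩ := exists_nat_one_div_lt hε
  filter_upwards [hω m, eventually_ge_atTop 16] with n h1 h2
  have hx : (16:ℝ) ≤ (n:ℝ) := by exact_mod_cast h2
  have hnpos : (0:ℝ) < (n:ℝ) := by linarith
  have h16 : Real.exp 1 ≤ Real.log 16 := by
    have h4 : Real.log 16 = 4 * Real.log 2 := by
      rw [show (16:ℝ) = 2^(4:ℕ) by norm_num, Real.log_pow]
      push_cast
      ring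
    nlinarith [Real.log_two_gt_d9, Real.exp_one_lt_d9]
  have hlx : Real.log 16 ≤ Real.log n := Real.log_le_log (by norm_num) hx
  have hlogpos : (0:ℝ) < Real.log n :=
    lt_of_lt_of_le (Real.exp_pos 1) (le_trans h16 hlx)
  have hlog : (1:ℝ) ≤ Real.log (Real.log n) := by
    rw [Real.le_log_iff_exp_le hlogpos]
    exact le_trans h16 hlx
  have hprod : (n:ℝ) ≤ (n:ℝ) * Real.log (Real.log n) :=
    le_mul_of_one_le_right hnpos.le hlog
  have hsq : Real.sqrt n ≤ Real.sqrt ((n:ℝ) * Real.log (Real.log n)) :=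
    Real.sqrt_le_sqrt hprod
  have hsqpos : (0:ℝ) < Real.sqrt n := Real.sqrt_pos.2 hnpos
  have hsq2pos : (0:ℝ) < Real.sqrt ((n:ℝ) * Real.log (Real.log n)) :=
    lt_of_lt_of_le hsqpos hsq
  rw [Real.norm_eq_abs, abs_div, abs_of_pos hsq2pos]
  have step1 : |g ((⇑T)^[n] ω)| / Real.sqrt ((n:ℝ) * Real.log (Real.log n))
      ≤ |g ((⇑T)^[n] ω)| / Real.sqrt n := by
    gcongr
  have step2 : |g ((⇑T)^[n] ω)| / Real.sqrt n ≤ 1/((m:ℝ)+1) := by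
    rw [div_le_iff₀ hsqpos]
    linarith
  calc |g ((⇑T)^[n] ω)| / Real.sqrt ((n:ℝ) * Real.log (Real.log n))
      ≤ 1/((m:ℝ)+1) := le_trans step1 step2
  _ < ε := hm
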